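/- Let n ≥ 1 be a natural number and let ζ ∈ ℂ be a primitive n-th root of unity. Let σ be the ℂ-algebra automorphism of ℂ[s,t] determined by σ(s) = ζ·s and σ(t) = ζ⁻¹·t (the action of the cyclic group ℤ/n ⊂ SU(2)). Then a polynomial f ∈ ℂ[s,t] satisfies σ(f) = f if and only if f belongs to the ℂ-subalgebra generated by the three polynomials s·t, s^n, and t^n. In other words, the ring of invariants of this ℤ/n-action equals Algebra.adjoin ℂ {st, s^n, t^n}. -/

import Mathlib

open MvPolynomial

/- Variables of `ℂ[s,t]`: `0 ↦ s`, `1 ↦ t`. -/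

/-- The action of the generator of `ℤ/n ⊂ SU(2)`: the algebra endomorphism of `ℂ[s,t]`
determined by `s ↦ ζ·s`, `t ↦ ζ⁻¹·t`. -/
noncomputable def cyclicAction (ζ : ℂ) : MvPolynomial (Fin 2) ℂ →ₐ[ℂ] MvPolynomial (Fin 2) ℂ :=
  aeval ![C ζ * X 0, C ζ⁻¹ * X 1]

lemma monomial_eq_two (d : Fin 2 →₀ ℕ) (c : ℂ) :
    (monomial d c : MvPolynomial (Fin 2) ℂ) = C c * X 0 ^ d 0 * X 1 ^ d 1 := by
  rw [monomial_eq, Finsupp.prod_fintype]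
  · simp [Fin.prod_univ_two, mul_assoc]
  · intro i; exact pow_zero _

lemma act_monomial (ζ : ℂ) (d : Fin 2 →₀ ℕ) (c : ℂ) :
    cyclicAction ζ (monomial d c) = monomial d (ζ ^ d 0 * ζ⁻¹ ^ d 1 * c) := by
  rw [monomial_eq_two, monomial_eq_two]
  simp only [cyclicAction, map_mul, map_pow, aeval_C, aeval_X]
  simp [Matrix.cons_val_zero, Matrix.cons_val_one]
  ring

lemma coeff_act (ζ : ℂ) (f : MvPolynomial (Fin 2) ℂ) (m : Fin 2 →₀ ℕ) :
    coeff m (cyclicAction ζ f) = ζ ^ m 0 * ζ⁻¹ ^ m 1 * coeff m f := by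
  conv_lhs => rw [f.as_sum]
  rw [map_sum]
  simp only [act_monomial]
  rw [coeff_sum]
  by_cases hm : m ∈ f.support
  · rw [Finset.sum_eq_single_of_mem m hm]
    · simp [coeff_monomial]
    · intro d _ hdm
      simp [coeff_monomial, hdm]
  · rw [Finset.sum_eq_zero, notMem_support_iff.mp hm, mul_zero]
    intro d hd
    have hdm : d ≠ m := fun h => hm (h ▸ hd)
    simp [coeff_monomial, hdm]

lemma mem_of_dvd (n a b : ℕ) (h : (n:ℤ) ∣ (a:ℤ) - b) :
    (X 0 : MvPolynomial (Fin 2) ℂ) ^ a * X 1 ^ b ∈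
      Algebra.adjoin ℂ ({X 0 * X 1, X 0 ^ n, X 1 ^ n} : Set (MvPolynomial (Fin 2) ℂ)) := by
  set A := Algebra.adjoin ℂ ({X 0 * X 1, X 0 ^ n, X 1 ^ n} : Set (MvPolynomial (Fin 2) ℂ))
  have h01 : (X 0 * X 1 : MvPolynomial (Fin 2) ℂ) ∈ A := Algebra.subset_adjoin (by simp)
  have h0 : (X 0 ^ n : MvPolynomial (Fin 2) ℂ) ∈ A := Algebra.subset_adjoin (by simp)
  have h1 : (X 1 ^ n : MvPolynomial (Fin 2) ℂ) ∈ A := Algebra.subset_adjoin (by simp)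
  rcases le_or_gt b a with hab | hab
  · obtain ⟨k, hk⟩ : n ∣ a - b := by
      have : ((a - b : ℕ) : ℤ) = (a:ℤ) - b := by omega
      exact_mod_cast this ▸ h
    have ha : a = b + n * k := by omega
    subst ha
    have : (X 0 : MvPolynomial (Fin 2) ℂ) ^ (b + n * k) * X 1 ^ b
        = (X 0 * X 1) ^ b * (X 0 ^ n) ^ k := by ring
    rw [this]
    exact mul_mem (pow_mem h01 _) (pow_mem h0 _)
  · obtain ⟨k, hk⟩ : n ∣ b - a := by
      have : ((b - a : ℕ) : ℤ) = -((a:ℤ) - b) := by omega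
      have h' : (n:ℤ) ∣ ((b - a : ℕ) : ℤ) := this ▸ dvd_neg.mpr h
      exact_mod_cast h'
    have hb : b = a + n * k := by omega
    subst hb
    have : (X 0 : MvPolynomial (Fin 2) ℂ) ^ a * X 1 ^ (a + n * k)
        = (X 0 * X 1) ^ a * (X 1 ^ n) ^ k := by ring
    rw [this]
    exact mul_mem (pow_mem h01 _) (pow_mem h1 _)

/-- The invariants of the cyclic group action on `ℂ[s,t]` are generated
by `s·t`, `s^n` and `t^n`. -/
theorem cyclic_invariants (n : ℕ) (hn : 1 ≤ n) (ζ : ℂ) (hζ : IsPrimitiveRoot ζ n)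
    (f : MvPolynomial (Fin 2) ℂ) :
    cyclicAction ζ f = f ↔
      f ∈ Algebra.adjoin ℂ ({X 0 * X 1, X 0 ^ n, X 1 ^ n} : Set (MvPolynomial (Fin 2) ℂ)) := by
  have hn0 : n ≠ 0 := by omega
  have hζ0 : ζ ≠ 0 := hζ.ne_zero hn0
  have hζn : ζ ^ n = 1 := hζ.pow_eq_one
  constructor
  · intro h
    rw [f.as_sum]
    apply sum_mem
    intro d hd
    have hc : ζ ^ d 0 * ζ⁻¹ ^ d 1 * coeff d f = coeff d f := by
      rw [← coeff_act, h]
    have hcf : coeff d f ≠ 0 := mem_support_iff.mp hd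
    have hχ : ζ ^ d 0 * ζ⁻¹ ^ d 1 = 1 := by
      have := mul_right_cancel₀ hcf (hc.trans (one_mul (coeff d f)).symm)
      exact this
    have hz : ζ ^ ((d 0 : ℤ) - d 1) = 1 := by
      rw [zpow_sub₀ hζ0, zpow_natCast, zpow_natCast, div_eq_mul_inv, ← inv_pow]
      exact hχ
    have hdvd : (n : ℤ) ∣ (d 0 : ℤ) - d 1 := hζ.zpow_eq_one_iff_dvd _ |>.mp hz
    rw [monomial_eq_two, mul_assoc]
    exact mul_mem (Subalgebra.algebraMap_mem _ (coeff d f) :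
      (algebraMap ℂ (MvPolynomial (Fin 2) ℂ)) (coeff d f) ∈ _) (mem_of_dvd n _ _ hdvd)
  · intro h
    induction h using Algebra.adjoin_induction with
    | mem x hx =>
      rcases hx with hx | hx | hx <;> subst hx
      · simp only [cyclicAction, map_mul, aeval_X]
        simp only [Matrix.cons_val_zero, Matrix.cons_val_one, Matrix.head_cons]
        rw [show (C ζ * X 0) * (C ζ⁻¹ * X 1) = C (ζ * ζ⁻¹) * (X 0 * X 1 :
          MvPolynomial (Fin 2) ℂ) by rw [map_mul]; ring]
        rw [mul_inv_cancel₀ hζ0, map_one, one_mul]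
      · simp only [cyclicAction, map_pow, aeval_X]
        simp only [Matrix.cons_val_zero]
        rw [mul_pow, ← map_pow, hζn, map_one, one_mul]
      · simp only [cyclicAction, map_pow, aeval_X]
        simp only [Matrix.cons_val_one, Matrix.head_cons, Matrix.cons_val_zero]
        rw [mul_pow, ← map_pow, inv_pow, hζn, inv_one, map_one, one_mul]
    | algebraMap r => simp [cyclicAction]
    | add x y _ _ hx hy => rw [map_add, hx, hy]
    | mul x y _ _ hx hy => rw [map_mul, hx, hy]
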